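/- Exponential sum identity: for Q a symmetric n×n matrix over GF(q) (q odd) of rank r, q^n ρ^{-r} Δ(Q) = Σ_{x ∈ GF(q)^n} [ (1+δ)/2 · ψ(Q(x)) + (1-δ)/2 · ψ(ν Q(x)) ], where Q(x) = xQx^T, δ = χ(-1), ν is a fixed nonsquare, ψ the canonical additive character, ρ the quadratic Gauss sum, and Δ(Q) the quadratic character of the determinant of the nonsingular part of Q. -/

import Mathlib

open Matrix
open scoped Classical

/-- The canonical additive character of the finite field `F` of characteristic `p`. -/
noncomputable def psi (p : ℕ) (F : Type) [Field F] [Fintype F] [Algebra (ZMod p) F] : F → ℂ :=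
  fun a => Complex.exp (2 * Real.pi * Complex.I * ((Algebra.trace (ZMod p) F a).val : ℂ) / p)

/-- `Δ(Q)`: the quadratic character of the product of the nonzero diagonal entries of a
diagonalization of the symmetric matrix `Q`, i.e. the quadratic character of the determinant
of the nonsingular part of `Q` (with `Δ(0) = 1`). -/
noncomputable def Delta (F : Type) [Field F] [Fintype F] [DecidableEq F] {n : ℕ}
    (Q : Matrix (Fin n) (Fin n) F) : ℤ :=
  if h : ∃ M : Matrix (Fin n) (Fin n) F, ∃ d : Fin n → F,
      IsUnit M ∧ Q = Mᵀ * Matrix.diagonal d * M then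
    quadraticChar F (∏ i ∈ Finset.univ.filter (fun i => h.choose_spec.choose i ≠ 0),
      h.choose_spec.choose i)
  else 1

section Aux

set_option linter.unusedSectionVars false

variable (p : ℕ) [Fact p.Prime] (F : Type) [Field F] [Fintype F] [Algebra (ZMod p) F]

/-- `psi` as a bundled additive character. -/
noncomputable def psiChar : AddChar F ℂ :=
  haveI : NeZero p := ⟨(Fact.out : p.Prime).ne_zero⟩
  (ZMod.stdAddChar (N := p)).compAddMonoidHom (Algebra.trace (ZMod p) F).toAddMonoidHom

lemma psiChar_apply (a : F) : psiChar p F a = psi p F a := by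
  haveI : NeZero p := ⟨(Fact.out : p.Prime).ne_zero⟩
  show ZMod.stdAddChar _ = _
  rw [ZMod.stdAddChar_apply, ZMod.toCircle_apply]
  rfl

lemma psiChar_isPrimitive (hp : p = ringChar F) : (psiChar p F).IsPrimitive := by
  haveI : NeZero p := ⟨(Fact.out : p.Prime).ne_zero⟩
  apply AddChar.IsPrimitive.of_ne_one
  rw [AddChar.ne_one_iff]
  subst hp
  obtain ⟨b, hb⟩ := FiniteField.trace_to_zmod_nondegenerate F (one_ne_zero (α := F))
  rw [one_mul] at hb
  refine ⟨b, fun h => hb ?_⟩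
  have h2 : ZMod.stdAddChar (N := ringChar F) (Algebra.trace (ZMod (ringChar F)) F b)
      = ZMod.stdAddChar (N := ringChar F) 0 := by
    rw [AddChar.map_zero_eq_one]; exact h
  exact ZMod.injective_stdAddChar h2

end Aux

/-- The quadratic character of `F`, valued in `ℂ`. -/
noncomputable abbrev chiC (F : Type) [Field F] [Fintype F] [DecidableEq F] : MulChar F ℂ :=
  (quadraticChar F).ringHomComp (Int.castRingHom ℂ)

lemma addChar_map_sum {A M : Type*} [AddCommMonoid A] [CommMonoid M] (ψ : AddChar A M)
    {ι : Type*} (s : Finset ι) (f : ι → A) : ψ (∑ i ∈ s, f i) = ∏ i ∈ s, ψ (f i) := by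
  classical
  induction s using Finset.cons_induction with
  | empty => simp
  | cons a s ha ih => rw [Finset.sum_cons, Finset.prod_cons, AddChar.map_add_eq_mul, ih]

section Field

set_option linter.unusedSectionVars false

variable {F : Type} [Field F] [Fintype F] [DecidableEq F]

lemma sum_psi_sq (hF2 : ringChar F ≠ 2) {ψ : AddChar F ℂ} (hψ : ψ.IsPrimitive) {a : F}
    (ha : a ≠ 0) :
    ∑ t : F, ψ (a * t ^ 2) = chiC F a * gaussSum (chiC F) ψ := by
  have h1 : ∑ t : F, ψ (a * t ^ 2)
      = ∑ u : F, ∑ _t ∈ Finset.univ.filter (fun t : F => t ^ 2 = u), ψ (a * u) :=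
    (Finset.sum_fiberwise' Finset.univ (fun t : F => t ^ 2) (fun u => ψ (a * u))).symm
  have hcard : ∀ u : F, ((Finset.univ.filter (fun t : F => t ^ 2 = u)).card : ℂ)
      = (quadraticChar F u : ℂ) + 1 := by
    intro u
    have := quadraticChar_card_sqrts hF2 u
    rw [Set.toFinset_setOf] at this
    exact_mod_cast congrArg (fun z : ℤ => (z : ℂ)) this
  rw [h1]
  simp only [Finset.sum_const, nsmul_eq_mul]
  have h2 : ∀ u : F, ((Finset.univ.filter (fun t : F => t ^ 2 = u)).card : ℂ) * ψ (a * u)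
      = (quadraticChar F u : ℂ) * ψ (a * u) + ψ (a * u) := by
    intro u; rw [hcard]; ring
  rw [Finset.sum_congr rfl fun u _ => h2 u, Finset.sum_add_distrib]
  have h3 : ∑ u : F, ψ (a * u) = 0 := by
    have := AddChar.sum_mulShift a hψ
    rw [if_neg ha] at this
    simpa [mul_comm] using this
  rw [h3, add_zero]
  have h4 : ∑ u : F, (quadraticChar F u : ℂ) * ψ (a * u)
      = gaussSum (chiC F) (ψ.mulShift a) := by
    simp [gaussSum, AddChar.mulShift_apply, MulChar.ringHomComp]
  rw [h4]
  have h5 := gaussSum_mulShift (chiC F) ψ (Units.mk0 a ha)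
  have hsq : chiC F a * chiC F a = 1 := by
    have h6 := quadraticChar_sq_one ha
    have h7 : (quadraticChar F a : ℂ) * (quadraticChar F a : ℂ) = 1 := by
      rw [← Int.cast_mul, ← sq, h6]; norm_num
    simpa [MulChar.ringHomComp] using h7
  calc gaussSum (chiC F) (ψ.mulShift a)
      = (chiC F a * chiC F a) * gaussSum (chiC F) (ψ.mulShift a) := by rw [hsq, one_mul]
    _ = chiC F a * (chiC F a * gaussSum (chiC F) (ψ.mulShift a)) := by ring
    _ = chiC F a * gaussSum (chiC F) ψ := by
        rw [show ((Units.mk0 a ha : Fˣ) : F) = a from rfl] at h5; rw [h5]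

lemma exists_diagonalization (hF2 : ringChar F ≠ 2) {n : ℕ} (Q : Matrix (Fin n) (Fin n) F)
    (hQ : Q.IsSymm) :
    ∃ M : Matrix (Fin n) (Fin n) F, ∃ d : Fin n → F,
      IsUnit M ∧ Q = Mᵀ * Matrix.diagonal d * M := by
  haveI : Invertible (2 : F) := invertibleOfNonzero (Ring.two_ne_zero hF2)
  have hsymm : LinearMap.IsSymm (Matrix.toBilin' Q) := by
    refine ⟨fun x y => ?_⟩
    simp only [RingHom.id_apply, Matrix.toBilin'_apply']
    rw [Matrix.dotProduct_mulVec, ← Matrix.mulVec_transpose, hQ.eq, dotProduct_comm]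
  obtain ⟨v, hv⟩ := LinearMap.BilinForm.exists_orthogonal_basis hsymm
  have hfr : Module.finrank F (Fin n → F) = n := by simp [Module.finrank_pi]
  let v' : Module.Basis (Fin n) F (Fin n → F) := v.reindex (finCongr hfr)
  have hv' : (Matrix.toBilin' Q).IsOrthoᵢ v' := by
    intro i j hij
    show (Matrix.toBilin' Q) (v' i) (v' j) = 0
    rw [show v' i = v ((finCongr hfr).symm i) from v.reindex_apply _ _,
        show v' j = v ((finCongr hfr).symm j) from v.reindex_apply _ _]
    refine hv ?_
    intro h
    exact hij (by simpa using congrArg (finCongr hfr) h)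
  set b := Pi.basisFun F (Fin n) with hb
  set N := b.toMatrix v' with hN
  have hNunit : IsUnit N :=
    ⟨⟨N, v'.toMatrix b, b.toMatrix_mul_toMatrix_flip v', v'.toMatrix_mul_toMatrix_flip b⟩, rfl⟩
  have key := BilinForm.toMatrix_mul_basis_toMatrix (b := b) v' (Matrix.toBilin' Q)
  have hQB : LinearMap.BilinForm.toMatrix b (Matrix.toBilin' Q) = Q := by
    rw [hb, BilinForm.toMatrix_basisFun]
    exact LinearMap.BilinForm.toMatrix'_toBilin' Q
  have hdiag : LinearMap.BilinForm.toMatrix v' (Matrix.toBilin' Q)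
      = Matrix.diagonal (fun i => (Matrix.toBilin' Q) (v' i) (v' i)) := by
    ext i j
    rw [BilinForm.toMatrix_apply]
    by_cases h : i = j
    · subst h; simp
    · rw [Matrix.diagonal_apply_ne _ h]; exact hv' h
  rw [hQB, hdiag] at key
  have hdet : IsUnit N.det := (Matrix.isUnit_iff_isUnit_det N).mp hNunit
  refine ⟨N⁻¹, fun i => (Matrix.toBilin' Q) (v' i) (v' i),
    ⟨⟨N⁻¹, N, Matrix.nonsing_inv_mul _ hdet, Matrix.mul_nonsing_inv _ hdet⟩, rfl⟩, ?_⟩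
  rw [← key]
  rw [Matrix.transpose_nonsing_inv]
  rw [Matrix.mul_assoc, Matrix.mul_assoc, Matrix.mul_nonsing_inv _ hdet, Matrix.mul_one,
    ← Matrix.mul_assoc, Matrix.nonsing_inv_mul _ (show IsUnit Nᵀ.det by
      rwa [Matrix.det_transpose]), Matrix.one_mul]

lemma sum_psi_quadform (hF2 : ringChar F ≠ 2) {ψ : AddChar F ℂ} (hψ : ψ.IsPrimitive)
    {n : ℕ} (M : Matrix (Fin n) (Fin n) F) (d : Fin n → F) (hM : IsUnit M)
    {c : F} (hc : c ≠ 0) :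
    ∑ x : Fin n → F, ψ (c * dotProduct x ((Mᵀ * Matrix.diagonal d * M).mulVec x))
      = ∏ i : Fin n, (if d i = 0 then (Fintype.card F : ℂ)
          else chiC F (c * d i) * gaussSum (chiC F) ψ) := by
  have hdet : IsUnit M.det := (Matrix.isUnit_iff_isUnit_det M).mp hM
  have hbij : Function.Bijective (fun x : Fin n → F => M.mulVec x) := by
    refine Function.bijective_iff_has_inverse.mpr ⟨fun y => M⁻¹.mulVec y, fun x => ?_, fun y => ?_⟩
    · show M⁻¹ *ᵥ (M *ᵥ x) = x
      rw [Matrix.mulVec_mulVec, Matrix.nonsing_inv_mul _ hdet, Matrix.one_mulVec]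
    · show M *ᵥ (M⁻¹ *ᵥ y) = y
      rw [Matrix.mulVec_mulVec, Matrix.mul_nonsing_inv _ hdet, Matrix.one_mulVec]
  have hquad : ∀ x : Fin n → F,
      dotProduct x ((Mᵀ * Matrix.diagonal d * M).mulVec x)
        = dotProduct (M.mulVec x) ((Matrix.diagonal d).mulVec (M.mulVec x)) := by
    intro x
    rw [Matrix.mul_assoc, ← Matrix.mulVec_mulVec, Matrix.dotProduct_mulVec,
      Matrix.vecMul_transpose, Matrix.mulVec_mulVec]
  have step1 : ∑ x : Fin n → F, ψ (c * dotProduct x ((Mᵀ * Matrix.diagonal d * M).mulVec x))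
      = ∑ y : Fin n → F, ψ (c * dotProduct y ((Matrix.diagonal d).mulVec y)) := by
    refine Fintype.sum_bijective _ hbij _ _ fun x => ?_
    rw [hquad x]
  rw [step1]
  have step2 : ∀ y : Fin n → F,
      ψ (c * dotProduct y ((Matrix.diagonal d).mulVec y))
        = ∏ i : Fin n, ψ ((c * d i) * (y i) ^ 2) := by
    intro y
    rw [dotProduct]
    simp only [Matrix.mulVec_diagonal]
    rw [Finset.mul_sum, ← addChar_map_sum]
    congr 1
    refine Finset.sum_congr rfl fun i _ => ?_
    ring
  rw [Finset.sum_congr rfl fun y _ => step2 y]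
  have step3 : ∑ y : Fin n → F, ∏ i : Fin n, ψ ((c * d i) * (y i) ^ 2)
      = ∏ i : Fin n, ∑ t : F, ψ ((c * d i) * t ^ 2) := by
    rw [Finset.prod_univ_sum, Fintype.piFinset_univ]
  rw [step3]
  refine Finset.prod_congr rfl fun i _ => ?_
  by_cases h : d i = 0
  · rw [if_pos h]
    simp [h]
  · rw [if_neg h]
    exact sum_psi_sq hF2 hψ (mul_ne_zero hc h)

end Field

/-- Exponential sum identity: for a symmetric `n × n` matrix `Q` over `GF(q)` (`q` odd) of
rank `r`, with `δ = χ(-1)`, `ν` a fixed nonsquare, `ψ` the canonical additive character and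
`ρ` the quadratic Gauss sum,
`q^n ρ^{-r} Δ(Q) = Σ_x [(1+δ)/2 · ψ(Q(x)) + (1-δ)/2 · ψ(ν Q(x))]`. -/
theorem exponential_sum_identity (q n r p : ℕ) [Fact p.Prime] (hn : 1 ≤ n) (F : Type) [Field F]
    [Fintype F] [DecidableEq F] [Algebra (ZMod p) F] (hp : p = ringChar F)
    (hq : Fintype.card F = q) (hodd : Odd q) (ν : F) (hν : ¬ IsSquare ν)
    (Q : Matrix (Fin n) (Fin n) F) (hQ : Q.IsSymm) (hr : Q.rank = r) :
    (q : ℂ) ^ n * (∑ α : F, psi p F (α ^ 2)) ^ (-(r : ℤ)) * (Delta F Q : ℂ) =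
      ∑ x : Fin n → F,
        ((1 + (quadraticChar F (-1) : ℂ)) / 2 * psi p F (dotProduct x (Q.mulVec x)) +
         (1 - (quadraticChar F (-1) : ℂ)) / 2 *
            psi p F (ν * dotProduct x (Q.mulVec x))) := by
  subst hq hr
  have hF2 : ringChar F ≠ 2 := by
    intro h
    have h2 := FiniteField.even_card_iff_char_two.mp h
    obtain ⟨k, hk⟩ := hodd
    omega
  set ψ : AddChar F ℂ := psiChar p F with hψdef
  have hψ : ψ.IsPrimitive := psiChar_isPrimitive p F hp
  set ρ : ℂ := gaussSum (chiC F) ψ with hρdef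
  have hchine : chiC F ≠ 1 :=
    (MulChar.ringHomComp_ne_one_iff Int.cast_injective).mpr (quadraticChar_ne_one hF2)
  have hcardne : ((Fintype.card F : ℂ)) ≠ 0 := by
    exact_mod_cast Fintype.card_ne_zero
  have hρne : ρ ≠ 0 := gaussSum_ne_zero_of_nontrivial hcardne hchine hψ
  have hρsq : ρ ^ 2 = ((quadraticChar F (-1) : ℤ) : ℂ) * (Fintype.card F : ℂ) := by
    rw [hρdef, gaussSum_sq hchine ((quadraticChar_isQuadratic F).comp _) hψ]
    rfl
  -- the sum defining ρ
  have hρsum : ∑ α : F, psi p F (α ^ 2) = ρ := by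
    rw [show ∑ α : F, psi p F (α ^ 2) = ∑ α : F, ψ ((1 : F) * α ^ 2) by
      refine Finset.sum_congr rfl fun α _ => ?_
      rw [one_mul, hψdef, psiChar_apply]]
    rw [sum_psi_sq hF2 hψ one_ne_zero, MulChar.map_one, one_mul]
  rw [hρsum]
  -- unfold Delta using the diagonalization
  have hex : ∃ M : Matrix (Fin n) (Fin n) F, ∃ d : Fin n → F,
      IsUnit M ∧ Q = Mᵀ * Matrix.diagonal d * M := exists_diagonalization hF2 Q hQ
  rw [Delta, dif_pos hex]
  set M : Matrix (Fin n) (Fin n) F := hex.choose with hM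
  set d : Fin n → F := hex.choose_spec.choose with hd
  obtain ⟨hMunit, hQdecomp⟩ := hex.choose_spec.choose_spec
  set s : Finset (Fin n) := Finset.univ.filter (fun i => d i ≠ 0) with hs
  -- rank computation
  have hrank : Q.rank = s.card := by
    rw [hQdecomp, Matrix.rank_mul_eq_left_of_isUnit_det M _ ((Matrix.isUnit_iff_isUnit_det M).mp hMunit),
      Matrix.rank_mul_eq_right_of_isUnit_det Mᵀ _ (by
        rw [Matrix.det_transpose]; exact (Matrix.isUnit_iff_isUnit_det M).mp hMunit),
      Matrix.rank_diagonal, Fintype.card_subtype]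
  have hrle : s.card ≤ n := le_trans (Finset.card_filter_le _ _) (by simp)
  have hν0 : ν ≠ 0 := by rintro rfl; exact hν ⟨0, (mul_zero 0).symm⟩
  have hcard0 : (Finset.univ.filter (fun i => ¬ d i = 0)).card = s.card := rfl
  have hnum : (Finset.univ.filter (fun i : Fin n => d i = 0)).card = n - s.card := by
    have h := Finset.card_filter_add_card_filter_not
      (s := (Finset.univ : Finset (Fin n))) (p := fun i => d i = 0)
    rw [hcard0, Finset.card_univ, Fintype.card_fin] at h
    omega
  have hprod : ∀ c : F,
      ∏ i : Fin n, (if d i = 0 then (Fintype.card F : ℂ) else chiC F (c * d i) * ρ)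
      = (Fintype.card F : ℂ) ^ (n - s.card)
          * ((chiC F c) ^ s.card * ρ ^ s.card * ∏ i ∈ s, chiC F (d i)) := by
    intro c
    rw [← Finset.prod_filter_mul_prod_filter_not Finset.univ (fun i => d i = 0)]
    have e1 : ∏ i ∈ Finset.univ.filter (fun i : Fin n => d i = 0),
        (if d i = 0 then (Fintype.card F : ℂ) else chiC F (c * d i) * ρ)
        = (Fintype.card F : ℂ) ^ (n - s.card) := by
      rw [Finset.prod_congr rfl (fun i hi => if_pos (Finset.mem_filter.mp hi).2),
        Finset.prod_const, hnum]
    have e2 : ∏ i ∈ Finset.univ.filter (fun i : Fin n => ¬ d i = 0),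
        (if d i = 0 then (Fintype.card F : ℂ) else chiC F (c * d i) * ρ)
        = (chiC F c) ^ s.card * ρ ^ s.card * ∏ i ∈ s, chiC F (d i) := by
      rw [Finset.prod_congr rfl (fun i hi => if_neg (Finset.mem_filter.mp hi).2)]
      rw [Finset.prod_congr rfl (fun i (_ : i ∈ Finset.univ.filter (fun i : Fin n => ¬ d i = 0)) =>
        show chiC F (c * d i) * ρ = chiC F c * chiC F (d i) * ρ by rw [_root_.map_mul])]
      rw [show Finset.univ.filter (fun i : Fin n => ¬ d i = 0) = s from rfl]
      rw [Finset.prod_mul_distrib, Finset.prod_mul_distrib, Finset.prod_const, Finset.prod_const]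
      ring
    rw [e1, e2]
  have hS : ∀ c : F, c ≠ 0 → ∑ x : Fin n → F, ψ (c * dotProduct x (Q.mulVec x))
      = ∏ i : Fin n, (if d i = 0 then (Fintype.card F : ℂ) else chiC F (c * d i) * ρ) := by
    intro c hc
    rw [hQdecomp]
    exact sum_psi_quadform hF2 hψ M d hMunit hc
  have hchi1 : chiC F (1 : F) = 1 := MulChar.map_one _
  have hchiν : chiC F ν = -1 := by
    have h := (quadraticChar_neg_one_iff_not_isSquare).mpr hν
    show ((quadraticChar F ν : ℤ) : ℂ) = -1
    rw [h]; norm_num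
  have hδ : ((quadraticChar F (-1) : ℤ) : ℂ) = 1 ∨ ((quadraticChar F (-1) : ℤ) : ℂ) = -1 := by
    rcases quadraticChar_dichotomy (show (-1 : F) ≠ 0 from neg_ne_zero.mpr one_ne_zero) with h | h
    · left; rw [h]; norm_num
    · right; rw [h]; norm_num
  have hP : ((quadraticChar F (∏ i ∈ s, d i) : ℤ) : ℂ) = ∏ i ∈ s, chiC F (d i) := by
    rw [map_prod]
    push_cast
    rfl
  simp only [← psiChar_apply, ← hψdef]
  rw [Finset.sum_add_distrib, ← Finset.mul_sum, ← Finset.mul_sum]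
  rw [show ∑ x : Fin n → F, ψ (dotProduct x (Q.mulVec x))
      = ∑ x : Fin n → F, ψ ((1:F) * dotProduct x (Q.mulVec x)) by simp only [one_mul]]
  rw [hS 1 one_ne_zero, hS ν hν0, hprod 1, hprod ν, hchi1, hchiν, hP, hrank]
  rw [_root_.zpow_neg, zpow_natCast]
  set δc : ℂ := ((quadraticChar F (-1) : ℤ) : ℂ) with hδcdef
  set k := s.card with hk
  set Qc : ℂ := (Fintype.card F : ℂ) with hQc
  set P : ℂ := ∏ i ∈ s, chiC F (d i) with hPdef
  have hkk : ∀ e : ℂ, ρ ^ 2 = e * Qc → ρ ^ k * ρ ^ k = e ^ k * Qc ^ k := by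
    intro e he
    calc ρ ^ k * ρ ^ k = (ρ * ρ) ^ k := (mul_pow ρ ρ k).symm
      _ = (e * Qc) ^ k := by rw [show ρ * ρ = ρ ^ 2 from (pow_two ρ).symm, he]
      _ = e ^ k * Qc ^ k := mul_pow _ _ _
  have h4 : Qc ^ (n - k) * Qc ^ k = Qc ^ n := by rw [← pow_add, Nat.sub_add_cancel hrle]
  have main : Qc ^ n * (ρ ^ k)⁻¹
      = Qc ^ (n - k) * ρ ^ k * ((1 + δc)/2 + (1 - δc)/2 * (-1 : ℂ) ^ k) := by
    refine mul_right_cancel₀ (pow_ne_zero k hρne) ?_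
    have hl : Qc ^ n * (ρ ^ k)⁻¹ * ρ ^ k = Qc ^ n := by
      field_simp
    rw [hl]
    rcases hδ with h | h
    · rw [show δc = 1 from h] at hρsq ⊢
      have h3 := hkk 1 hρsq
      linear_combination (-(Qc ^ (n - k))) * h3 - h4
    · rw [show δc = -1 from h] at hρsq ⊢
      have h3 := hkk (-1) hρsq
      have h6 : ((-1 : ℂ)) ^ (k * 2) = 1 := by rw [mul_comm, pow_mul]; norm_num
      linear_combination (-(Qc ^ (n - k)) * (-1 : ℂ) ^ k) * h3
        - (Qc ^ (n - k) * Qc ^ k) * h6 - h4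
  linear_combination P * main
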